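/- Let V_nat = ℂ(q)u₁ ⊕ ℂ(q)u₂ be the natural representation of U_q(sl₂) with Eu₂ = u₁, Fu₁ = u₂, Ku₁ = qu₁, Ku₂ = q⁻¹u₂, and let B = F + q⁻¹EK⁻¹. Let M be a module on which B acts, and v ∈ M with Bv = [a]v for a ∈ ℤ. Then on M ⊗ V_nat with B acting via Δ(B) = B ⊗ K⁻¹ + 1 ⊗ B, the vectors v ⊗ (u₁ ± q^{±a}u₂) are B-eigenvectors with eigenvalues [a ± 1]. -/

import Mathlib

noncomputable section

open TensorProduct

set_option maxHeartbeats 1000000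
set_option synthInstance.maxHeartbeats 1000000

/-- `K = ℂ(q)`. -/
abbrev Kq : Type := RatFunc ℂ

/-- The variable `q`. -/
def qq : Kq := RatFunc.X

/-- The quantum integer `[n] = (qⁿ − q⁻ⁿ)/(q − q⁻¹)`. -/
noncomputable def qint (n : ℤ) : Kq := (qq ^ n - qq ^ (-n)) / (qq - qq⁻¹)

/-- The natural representation `V_nat = ℂ(q)u₁ ⊕ ℂ(q)u₂` of `U_q(sl₂)`. -/
abbrev Vnat : Type := Kq × Kq

def u1 : Vnat := (1, 0)
def u2 : Vnat := (0, 1)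

/-- `E` on `V_nat`: `Eu₂ = u₁`, `Eu₁ = 0`. -/
def Enat : Vnat →ₗ[Kq] Vnat := (LinearMap.fst Kq Kq Kq).prod 0 ∘ₗ
  (LinearMap.snd Kq Kq Kq).prod (LinearMap.fst Kq Kq Kq)

/-- `F` on `V_nat`: `Fu₁ = u₂`, `Fu₂ = 0`. -/
def Fnat : Vnat →ₗ[Kq] Vnat := (0 : Vnat →ₗ[Kq] Kq).prod (LinearMap.fst Kq Kq Kq)

/-- `K` on `V_nat`: `Ku₁ = qu₁`, `Ku₂ = q⁻¹u₂`. -/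
def Knat : Vnat →ₗ[Kq] Vnat :=
  (qq • LinearMap.fst Kq Kq Kq).prod (qq⁻¹ • LinearMap.snd Kq Kq Kq)

/-- `K⁻¹` on `V_nat`. -/
def Kinvnat : Vnat →ₗ[Kq] Vnat :=
  (qq⁻¹ • LinearMap.fst Kq Kq Kq).prod (qq • LinearMap.snd Kq Kq Kq)

/-- `B = F + q⁻¹EK⁻¹` acting on `V_nat`. -/
def Bnat : Vnat →ₗ[Kq] Vnat := Fnat + qq⁻¹ • (Enat ∘ₗ Kinvnat)

/-- If `Bv = [a]v`, then on `M ⊗ V_nat`, with `B` acting via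
`Δ(B) = B ⊗ K⁻¹ + 1 ⊗ B`, the vectors `v ⊗ (u₁ ± q^{±a}u₂)` are `B`-eigenvectors of
eigenvalues `[a ± 1]`. -/
lemma hq : qq ≠ 0 := RatFunc.X_ne_zero

lemma hsq : (qq : Kq) ^ 2 ≠ 1 := by
  intro h
  have h2 : algebraMap (Polynomial ℂ) Kq (Polynomial.X ^ 2) = algebraMap (Polynomial ℂ) Kq 1 := by
    simpa [map_pow, RatFunc.algebraMap_X, qq] using h
  have h3 := IsFractionRing.injective (Polynomial ℂ) Kq h2
  have := congrArg (Polynomial.eval 0) h3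
  simp at this

lemma hd : qq - qq⁻¹ ≠ 0 := by
  rw [sub_ne_zero]
  intro h
  apply hsq
  rw [sq]
  nth_rewrite 2 [h]
  exact mul_inv_cancel₀ hq

lemma key1 (a : ℤ) : qint a * qq⁻¹ + qq ^ a = qint (a+1) := by
  unfold qint
  have h1 : (qq : Kq) ^ a ≠ 0 := zpow_ne_zero _ hq
  have h0 := hq
  simp only [neg_add, zpow_add₀ hq, zpow_neg, zpow_one]
  set d := qq - qq⁻¹ with hdd
  have h2 : d ≠ 0 := hd
  field_simp
  rw [hdd]
  field_simp
  ring
lemma key2 (a : ℤ) : qint a * (qq * qq ^ a) + 1 = qint (a+1) * qq ^ a := by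
  unfold qint
  have h1 : (qq : Kq) ^ a ≠ 0 := zpow_ne_zero _ hq
  have h0 := hq
  simp only [neg_add, zpow_add₀ hq, zpow_neg, zpow_one]
  set d := qq - qq⁻¹ with hdd
  have h2 : d ≠ 0 := hd
  field_simp
  rw [hdd]
  field_simp
  ring
lemma key3 (a : ℤ) : qint a * qq⁻¹ - qq ^ (-a) = qint (a-1) := by
  unfold qint
  have h1 : (qq : Kq) ^ a ≠ 0 := zpow_ne_zero _ hq
  have h0 := hq
  simp only [neg_sub, sub_eq_add_neg, neg_add, neg_neg, zpow_add₀ hq, zpow_neg, zpow_one]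
  have h3 : qq * qq + (-1 : Kq) ≠ 0 := by
    intro h
    apply hsq
    rw [sq, ← sub_eq_zero]
    linear_combination h
  have h4 : (-1 + qq ^ 2 : Kq) ≠ 0 := by
    intro h
    apply h3
    linear_combination h
  field_simp
  ring_nf
  field_simp
  ring
lemma key4 (a : ℤ) : -(qint a * (qq * qq ^ (-a))) + 1 = -(qint (a-1) * qq ^ (-a)) := by
  unfold qint
  have h1 : (qq : Kq) ^ a ≠ 0 := zpow_ne_zero _ hq
  have h0 := hq
  simp only [neg_sub, sub_eq_add_neg, neg_add, neg_neg, zpow_add₀ hq, zpow_neg, zpow_one]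
  have h3 : qq * qq + (-1 : Kq) ≠ 0 := by
    intro h
    apply hsq
    rw [sq, ← sub_eq_zero]
    linear_combination h
  have h4 : (-1 + qq ^ 2 : Kq) ≠ 0 := by
    intro h
    apply h3
    linear_combination h
  field_simp
  ring_nf
  field_simp
  ring

lemma step8 (M : Type) [AddCommGroup M] [Module Kq M]
    (BM : M →ₗ[Kq] M) (v : M) (a b : ℤ) (hv : BM v = qint a • v)
    (w : Vnat) (hw : qint a • Kinvnat w + Bnat w = qint b • w) :
    (TensorProduct.map BM Kinvnat + TensorProduct.map (LinearMap.id : M →ₗ[Kq] M) Bnat)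
        (v ⊗ₜ[Kq] w) = qint b • (v ⊗ₜ[Kq] w) := by
  rw [LinearMap.add_apply, TensorProduct.map_tmul, TensorProduct.map_tmul, hv,
    LinearMap.id_apply, TensorProduct.smul_tmul, ← TensorProduct.tmul_add, hw,
    TensorProduct.tmul_smul]

lemma vec1 (a : ℤ) :
    qint a • Kinvnat (u1 + qq ^ a • u2) + Bnat (u1 + qq ^ a • u2)
      = qint (a+1) • (u1 + qq ^ a • u2) := by
  have k1 := key1 a
  have k2 := key2 a
  simp [Kinvnat, Bnat, Fnat, Enat, u1, u2, Prod.ext_iff, smul_eq_mul, mul_comm, mul_assoc,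
    inv_mul_cancel_left₀ hq, mul_inv_cancel₀ hq, zpow_neg]
  constructor
  · linear_combination k1 + qq ^ a * mul_inv_cancel₀ hq
  · linear_combination k2

lemma vec2 (a : ℤ) :
    qint a • Kinvnat (u1 - qq ^ (-a) • u2) + Bnat (u1 - qq ^ (-a) • u2)
      = qint (a-1) • (u1 - qq ^ (-a) • u2) := by
  have k3 := key3 a
  have k4 := key4 a
  simp only [zpow_neg] at k3 k4 ⊢
  simp [Kinvnat, Bnat, Fnat, Enat, u1, u2, Prod.ext_iff, smul_eq_mul, mul_comm, mul_assoc,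
    inv_mul_cancel_left₀ hq, mul_inv_cancel₀ hq, zpow_neg]
  constructor
  · linear_combination k3
  · linear_combination k4

theorem statement8 (M : Type) [AddCommGroup M] [Module Kq M]
    (BM : M →ₗ[Kq] M) (v : M) (a : ℤ) (hv : BM v = qint a • v) :
    (TensorProduct.map BM Kinvnat + TensorProduct.map (LinearMap.id : M →ₗ[Kq] M) Bnat)
        (v ⊗ₜ[Kq] (u1 + qq ^ a • u2)) =
      qint (a + 1) • (v ⊗ₜ[Kq] (u1 + qq ^ a • u2)) ∧
    (TensorProduct.map BM Kinvnat + TensorProduct.map (LinearMap.id : M →ₗ[Kq] M) Bnat)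
        (v ⊗ₜ[Kq] (u1 - qq ^ (-a) • u2)) =
      qint (a - 1) • (v ⊗ₜ[Kq] (u1 - qq ^ (-a) • u2)) := by
  exact ⟨step8 M BM v a (a+1) hv _ (vec1 a), step8 M BM v a (a-1) hv _ (vec2 a)⟩

end
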